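/- For every formal power series f over a field K and all natural numbers m and n, there exists an (m,n)-Padé pair (p, q) for f with q ≠ 0. -/

import Mathlib

/-- `(p, q)` is an `(m,n)`-Padé pair for the formal power series `f`:
`deg p ≤ m`, `deg q ≤ n`, and `X^(m+n+1)` divides `q·f − p`. -/
def IsPadePair {K : Type*} [Field K] (f : PowerSeries K) (m n : ℕ)
    (p q : Polynomial K) : Prop :=
  p.degree ≤ (m : WithBot ℕ) ∧ q.degree ≤ (n : WithBot ℕ) ∧
    (PowerSeries.X : PowerSeries K) ^ (m + n + 1) ∣
      ((q : PowerSeries K) * f - (p : PowerSeries K))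

lemma withbot_lt_succ {d : WithBot ℕ} {n : ℕ} (h : d < (n : ℕ) + 1) : d ≤ (n : WithBot ℕ) := by
  have h2 : d < ((n+1 : ℕ) : WithBot ℕ) := by push_cast; exact h
  induction d using WithBot.recBotCoe with
  | bot => exact bot_le
  | coe a =>
    rw [Nat.cast_withBot] at h2
    rw [Nat.cast_withBot]
    rw [WithBot.coe_lt_coe] at h2
    rw [WithBot.coe_le_coe]
    omega

open Polynomial PowerSeries in
/-- For every formal power series `f` over a field `K` and all `m n : ℕ`, there exists
an `(m,n)`-Padé pair `(p, q)` for `f` with `q ≠ 0`. -/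
theorem exists_pade_pair {K : Type*} [Field K] (f : PowerSeries K) (m n : ℕ) :
    ∃ p q : Polynomial K, IsPadePair f m n p q ∧ q ≠ 0 := by
  -- The linear map sending q (of degree < n+1) to the coefficients m+1, ..., m+n of q*f.
  let φ : Polynomial.degreeLT K (n+1) →ₗ[K] (Fin n → K) :=
    { toFun := fun q i => PowerSeries.coeff (m+1+i) ((q : Polynomial K) * f)
      map_add' := by
        intro a b
        funext i
        push_cast
        simp [add_mul]
      map_smul' := by
        intro c a
        funext i
        simp only [Pi.smul_apply, Submodule.coe_smul_of_tower, Polynomial.smul_eq_C_mul,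
          Polynomial.coe_mul, Polynomial.coe_C, ← PowerSeries.smul_eq_C_mul,
          smul_mul_assoc, map_smul, smul_eq_mul, RingHom.id_apply] }
  let ψ : (Fin (n+1) → K) →ₗ[K] (Fin n → K) :=
    φ ∘ₗ (Polynomial.degreeLTEquiv K (n+1)).symm.toLinearMap
  have hψ : ¬ Function.Injective ψ := by
    intro h
    have := LinearMap.finrank_le_finrank_of_injective h
    simp [Module.finrank_pi] at this
  rw [← LinearMap.ker_eq_bot] at hψ
  obtain ⟨x, hxker, hx0⟩ := Submodule.ne_bot_iff _ |>.mp hψ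
  set qs : Polynomial.degreeLT K (n+1) := (Polynomial.degreeLTEquiv K (n+1)).symm x with hqs
  have hq0 : (qs : Polynomial K) ≠ 0 := by
    intro h
    apply hx0
    have : qs = 0 := Subtype.ext h
    have := congrArg (Polynomial.degreeLTEquiv K (n+1)) this
    simpa [hqs] using this
  have hφqs : φ qs = 0 := by
    rw [LinearMap.mem_ker] at hxker
    exact hxker
  set q : Polynomial K := (qs : Polynomial K) with hq
  set p : Polynomial K := PowerSeries.trunc (m+1) ((q : PowerSeries K) * f) with hp
  refine ⟨p, q, ⟨?_, ?_, ?_⟩, hq0⟩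
  · have := PowerSeries.degree_trunc_lt ((q : PowerSeries K) * f) (m+1)
    rw [← hp] at this
    exact withbot_lt_succ (by exact_mod_cast this)
  · have := Polynomial.mem_degreeLT.mp qs.2
    exact withbot_lt_succ (by exact_mod_cast this)
  · rw [PowerSeries.X_pow_dvd_iff]
    intro k hk
    rw [map_sub]
    rcases lt_or_ge k (m+1) with hkm | hkm
    · rw [hp, Polynomial.coeff_coe, PowerSeries.coeff_trunc, if_pos hkm, sub_self]
    · have hcoef : PowerSeries.coeff k ((q : PowerSeries K) * f) = 0 := by
        have hi : k - (m+1) < n := by omega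
        have := congrFun hφqs ⟨k - (m+1), hi⟩
        simp only [Pi.zero_apply] at this
        simpa [φ, hq, show m+1+(k-(m+1)) = k by omega] using this
      rw [hcoef, hp, Polynomial.coeff_coe, PowerSeries.coeff_trunc,
        if_neg (by omega), sub_zero]
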